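/- Suppose the dynamical system (X,T,μ) satisfies the exponential concentration inequality with constant C > 0. Then there exists a constant D > 0 such that for every ε > 0, every n ≥ 1, every separately Lipschitz K : (ℝ^d)^n → ℝ, and every t > 0, μ_n ⊗ P^n(|K(y_0,…,y_{n−1}) − E_{μ_n ⊗ P^n}[K(y_0,…,y_{n−1})]| ≥ t) ≤ 2 exp(−t² / (4 D (1 + ε²) Σ_{j=0}^{n−1} Lip_j(K)²)). -/

import Mathlib

open MeasureTheory Real

noncomputable section

/-- `K` is separately Lipschitz in each of its `n` variables, with
`L j` a Lipschitz constant for the `j`-th variable. -/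
def SepLip {E : Type*} [PseudoMetricSpace E] {n : ℕ}
    (K : (Fin n → E) → ℝ) (L : Fin n → ℝ) : Prop :=
  ∀ (x : Fin n → E) (j : Fin n) (y : E),
    |K x - K (Function.update x j y)| ≤ L j * dist (x j) y

lemma exp_le_add_exp_sq (x : ℝ) : Real.exp x ≤ x + Real.exp (x ^ 2) := by
  rcases le_or_gt x (-1) with h | h
  · have h1 : Real.exp x < 1 := Real.exp_lt_one_iff.2 (by linarith)
    have h2 : x ^ 2 + 1 ≤ Real.exp (x ^ 2) := Real.add_one_le_exp _
    nlinarith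
  rcases le_or_gt 1 x with h' | h'
  · have h1 : Real.exp x ≤ Real.exp (x ^ 2) := Real.exp_le_exp.2 (by nlinarith)
    linarith
  · have hx : |x| ≤ 1 := abs_le.2 ⟨by linarith, by linarith⟩
    have hb := Real.exp_bound hx (n := 3) (by norm_num)
    have hsum : ∑ m ∈ Finset.range 3, x ^ m / m.factorial = 1 + x + x ^ 2 / 2 := by
      norm_num [Finset.sum_range_succ, Nat.factorial]
    rw [hsum] at hb
    have habs3 : |x| ^ 3 ≤ x ^ 2 := by
      have h1 : |x| ^ 3 = |x| * x ^ 2 := by rw [← sq_abs]; ring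
      nlinarith [abs_nonneg x, sq_nonneg x]
    have hb2 : Real.exp x ≤ 1 + x + x ^ 2 / 2 + |x| ^ 3 * (2 / 9) := by
      have := (abs_sub_le_iff.1 hb).1
      norm_num [Nat.factorial] at this
      linarith
    have h2 : x ^ 2 + 1 ≤ Real.exp (x ^ 2) := Real.add_one_le_exp _
    nlinarith [abs_nonneg x]

section Tele
variable {α : Type*} [PseudoMetricSpace α]

lemma sepLip_sum_bound_aux {n : ℕ} {K : (Fin n → α) → ℝ} {L : Fin n → ℝ}
    (hK : SepLip K L) (s : Finset (Fin n)) :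
    ∀ x y : Fin n → α, (∀ j ∉ s, x j = y j) →
      |K x - K y| ≤ ∑ j ∈ s, L j * dist (x j) (y j) := by
  induction s using Finset.induction_on with
  | empty =>
    intro x y h
    have : x = y := funext fun j => h j (by simp)
    simp [this]
  | insert a s ha ih =>
    intro x y h
    set x' := Function.update x a (y a) with hx'
    have h1 : |K x - K x'| ≤ L a * dist (x a) (y a) := hK x a (y a)
    have h2 : ∀ j ∉ s, x' j = y j := by
      intro j hj
      by_cases hja : j = a
      · subst hja; simp [hx']
      · rw [hx', Function.update_of_ne hja]
        exact h j (by simp [hja, hj])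
    have h3 := ih x' y h2
    have h4 : ∑ j ∈ s, L j * dist (x' j) (y j) = ∑ j ∈ s, L j * dist (x j) (y j) :=
      Finset.sum_congr rfl fun j hj => by
        rw [hx', Function.update_of_ne (by rintro rfl; exact ha hj)]
    rw [Finset.sum_insert ha]
    calc |K x - K y| ≤ |K x - K x'| + |K x' - K y| := abs_sub_le _ _ _
      _ ≤ L a * dist (x a) (y a) + ∑ j ∈ s, L j * dist (x j) (y j) := by
          rw [← h4]; exact add_le_add h1 h3

lemma sepLip_sum_bound {n : ℕ} {K : (Fin n → α) → ℝ} {L : Fin n → ℝ}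
    (hK : SepLip K L) (x y : Fin n → α) :
    |K x - K y| ≤ ∑ j, L j * dist (x j) (y j) :=
  sepLip_sum_bound_aux hK Finset.univ x y (fun j hj => absurd (Finset.mem_univ j) hj)

lemma sepLip_continuous {n : ℕ} {K : (Fin n → α) → ℝ} {L : Fin n → ℝ}
    (hK : SepLip K L) (hL : ∀ j, 0 ≤ L j) : Continuous K := by
  have : LipschitzWith (∑ j, L j).toNNReal K := by
    apply LipschitzWith.of_dist_le_mul
    intro x y
    rw [Real.dist_eq, Real.coe_toNNReal _ (Finset.sum_nonneg fun j _ => hL j)]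
    calc |K x - K y| ≤ ∑ j, L j * dist (x j) (y j) := sepLip_sum_bound hK x y
      _ ≤ ∑ j : Fin n, L j * dist x y := by
          apply Finset.sum_le_sum
          intro j _
          exact mul_le_mul_of_nonneg_left (dist_le_pi_dist x y j) (hL j)
      _ = (∑ j, L j) * dist x y := by rw [Finset.sum_mul]
  exact this.continuous
end Tele

section OneVar
open MeasureTheory Real
variable {α : Type*} [NormedAddCommGroup α] [MeasurableSpace α] [BorelSpace α]
  [SecondCountableTopology α]
set_option linter.unusedSectionVars false

lemma onevar_mgf (P : Measure α) [IsProbabilityMeasure P] (hP : ∀ᵐ ξ ∂P, ‖ξ‖ ≤ 1)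
    (g : α → ℝ) (M : ℝ) (hM : 0 ≤ M) (hg : ∀ a b, |g a - g b| ≤ M * dist a b) :
    ∫ ξ, Real.exp (g ξ - ∫ η, g η ∂P) ∂P ≤ Real.exp (4 * M ^ 2) := by
  have hcont : Continuous g := by
    have : LipschitzWith M.toNNReal g := by
      apply LipschitzWith.of_dist_le_mul
      intro a b
      rw [Real.dist_eq, Real.coe_toNNReal _ hM]
      exact hg a b
    exact this.continuous
  have hbdd : ∀ᵐ ξ ∂P, |g ξ| ≤ |g 0| + M := by
    filter_upwards [hP] with ξ hξ
    have h1 := hg ξ 0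
    rw [dist_zero_right] at h1
    have : |g ξ| - |g 0| ≤ |g ξ - g 0| := abs_sub_abs_le_abs_sub _ _
    nlinarith
  have gint : Integrable g P :=
    (integrable_const (|g 0| + M)).mono' hcont.aestronglyMeasurable
      (hbdd.mono fun ξ h => by rwa [Real.norm_eq_abs])
  set m := ∫ η, g η ∂P with hm
  have hZ : ∀ᵐ ξ ∂P, |g ξ - m| ≤ 2 * M := by
    filter_upwards [hP] with ξ hξ
    have heq : g ξ - m = ∫ η, (g ξ - g η) ∂P := by
      rw [integral_sub (integrable_const _) gint, integral_const, probReal_univ]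
      simp [hm]
    rw [heq]
    have := norm_integral_le_of_norm_le_const (μ := P) (C := 2 * M)
      (f := fun η => g ξ - g η) ?_
    · simpa [measure_univ] using this
    · filter_upwards [hP] with η hη
      rw [Real.norm_eq_abs]
      calc |g ξ - g η| ≤ M * dist ξ η := hg ξ η
        _ ≤ M * (‖ξ‖ + ‖η‖) := by
            apply mul_le_mul_of_nonneg_left _ hM
            rw [dist_eq_norm]; exact norm_sub_le _ _
        _ ≤ 2 * M := by nlinarith
  have measZ : AEStronglyMeasurable (fun ξ => g ξ - m) P :=
    (hcont.sub continuous_const).aestronglyMeasurable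
  have Zint : Integrable (fun ξ => g ξ - m) P := gint.sub (integrable_const _)
  have expZint : Integrable (fun ξ => Real.exp (g ξ - m)) P := by
    apply (integrable_const (Real.exp (2 * M))).mono'
      ((Real.continuous_exp.comp (hcont.sub continuous_const)).aestronglyMeasurable)
    filter_upwards [hZ] with ξ h
    simp only [Function.comp, Real.norm_eq_abs, abs_of_pos (Real.exp_pos _)]
    exact Real.exp_le_exp.2 ((le_abs_self _).trans h)
  have expZsqint : Integrable (fun ξ => Real.exp ((g ξ - m) ^ 2)) P := by
    apply (integrable_const (Real.exp (4 * M ^ 2))).mono'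
      ((Real.continuous_exp.comp ((hcont.sub continuous_const).pow 2)).aestronglyMeasurable)
    filter_upwards [hZ] with ξ h
    simp only [Function.comp, Real.norm_eq_abs, abs_of_pos (Real.exp_pos _)]
    apply Real.exp_le_exp.2
    show (g ξ - m) ^ 2 ≤ 4 * M ^ 2
    nlinarith [abs_nonneg (g ξ - m), sq_abs (g ξ - m)]
  have hZmean : ∫ ξ, (g ξ - m) ∂P = 0 := by
    rw [integral_sub gint (integrable_const _), integral_const, probReal_univ]
    simp [hm]
  calc ∫ ξ, Real.exp (g ξ - m) ∂P
      ≤ ∫ ξ, ((g ξ - m) + Real.exp ((g ξ - m) ^ 2)) ∂P := by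
        apply integral_mono expZint (Zint.add expZsqint)
        intro ξ; exact exp_le_add_exp_sq _
    _ = ∫ ξ, (g ξ - m) ∂P + ∫ ξ, Real.exp ((g ξ - m) ^ 2) ∂P := integral_add Zint expZsqint
    _ ≤ 0 + Real.exp (4 * M ^ 2) := by
        rw [hZmean]
        apply add_le_add le_rfl
        calc ∫ ξ, Real.exp ((g ξ - m) ^ 2) ∂P ≤ ∫ _, Real.exp (4 * M ^ 2) ∂P := by
              apply integral_mono_ae expZsqint (integrable_const _)
              filter_upwards [hZ] with ξ h
              apply Real.exp_le_exp.2
              nlinarith [abs_nonneg (g ξ - m), sq_abs (g ξ - m)]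
          _ = Real.exp (4 * M ^ 2) := by rw [integral_const, probReal_univ]; simp
    _ = Real.exp (4 * M ^ 2) := by ring

lemma pi_ae_unit (P : Measure α) [IsProbabilityMeasure P] (hP : ∀ᵐ ξ ∂P, ‖ξ‖ ≤ 1) (n : ℕ) :
    ∀ᵐ ξ ∂(Measure.pi fun _ : Fin n => P), ∀ i, ‖ξ i‖ ≤ 1 := by
  have hB : MeasurableSet {a : α | ‖a‖ ≤ 1} :=
    (isClosed_le continuous_norm continuous_const).measurableSet
  have hPB : P {a : α | ‖a‖ ≤ 1} = 1 := by
    rw [← prob_compl_eq_zero_iff hB, Set.compl_setOf]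
    simpa [ae_iff] using hP
  have hpi : (Measure.pi fun _ : Fin n => P) (Set.pi Set.univ fun _ => {a : α | ‖a‖ ≤ 1}) = 1 := by
    rw [Measure.pi_pi]
    simp [hPB]
  have hmeas : MeasurableSet (Set.pi Set.univ fun _ : Fin n => {a : α | ‖a‖ ≤ 1}) :=
    MeasurableSet.univ_pi fun _ => hB
  rw [ae_iff]
  have : {ξ : Fin n → α | ¬ ∀ i, ‖ξ i‖ ≤ 1} =
      (Set.pi Set.univ fun _ : Fin n => {a : α | ‖a‖ ≤ 1})ᶜ := by
    ext ξ; simp [Set.mem_pi]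
  rw [this, measure_compl hmeas (by simp), hpi]
  simp
end OneVar

section Noise
open MeasureTheory Real
variable {α : Type*} [NormedAddCommGroup α] [MeasurableSpace α] [BorelSpace α]
  [SecondCountableTopology α]
set_option linter.unusedSectionVars false

lemma fubini_cons (P : Measure α) [IsProbabilityMeasure P] (n : ℕ)
    (g : (Fin (n+1) → α) → ℝ) (hg : Integrable g (Measure.pi fun _ : Fin (n+1) => P)) :
    ∫ ξ, g ξ ∂(Measure.pi fun _ : Fin (n+1) => P)
      = ∫ b, ∫ a, g (Fin.cons a b) ∂P ∂(Measure.pi fun _ : Fin n => P) := by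
  have mp := (measurePreserving_piFinSuccAbove (fun _ : Fin (n+1) => P) 0).symm
  have hsymm : ∀ (a : α) (b : Fin n → α),
      (MeasurableEquiv.piFinSuccAbove (fun _ : Fin (n+1) => α) 0).symm (a, b) = Fin.cons a b := by
    intro a b
    simp [MeasurableEquiv.piFinSuccAbove, Fin.consEquiv]
  rw [← mp.integral_comp' (g := g)]
  have hint : Integrable
      (fun p : α × (Fin n → α) =>
        g ((MeasurableEquiv.piFinSuccAbove (fun _ : Fin (n+1) => α) 0).symm p))
      (P.prod (Measure.pi fun _ : Fin n => P)) :=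
    (mp.integrable_comp_emb (MeasurableEquiv.measurableEmbedding _)).2 hg
  rw [integral_prod_symm _ hint]
  simp_rw [hsymm]

lemma sepLip_abs_bound {n : ℕ} {f : (Fin n → α) → ℝ} {M : Fin n → ℝ}
    (hf : SepLip f M) (hM : ∀ j, 0 ≤ M j) (ξ : Fin n → α) (h : ∀ i, ‖ξ i‖ ≤ 1) :
    |f ξ| ≤ |f (fun _ => 0)| + ∑ j, M j := by
  have h1 := sepLip_sum_bound hf ξ (fun _ => 0)
  have h2 : ∑ j, M j * dist (ξ j) 0 ≤ ∑ j, M j := by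
    apply Finset.sum_le_sum
    intro j _
    have hd : dist (ξ j) 0 ≤ 1 := by rw [dist_zero_right]; exact h j
    nlinarith [hM j, dist_nonneg (x := ξ j) (y := (0 : α))]
  have h3 := abs_sub_abs_le_abs_sub (f ξ) (f (fun _ => 0))
  linarith

lemma sepLip_integrable (P : Measure α) [IsProbabilityMeasure P] (hP : ∀ᵐ ξ ∂P, ‖ξ‖ ≤ 1)
    {n : ℕ} {f : (Fin n → α) → ℝ} {M : Fin n → ℝ} (hf : SepLip f M) (hM : ∀ j, 0 ≤ M j) :
    Integrable f (Measure.pi fun _ : Fin n => P) :=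
  (integrable_const (|f (fun _ => 0)| + ∑ j, M j)).mono'
    (sepLip_continuous hf hM).aestronglyMeasurable
    ((pi_ae_unit P hP n).mono fun ξ h => by
      rw [Real.norm_eq_abs]; exact sepLip_abs_bound hf hM ξ h)

lemma sepLip_exp_integrable (P : Measure α) [IsProbabilityMeasure P] (hP : ∀ᵐ ξ ∂P, ‖ξ‖ ≤ 1)
    {n : ℕ} {f : (Fin n → α) → ℝ} {M : Fin n → ℝ} (hf : SepLip f M) (hM : ∀ j, 0 ≤ M j)
    (c : ℝ) :
    Integrable (fun ξ => Real.exp (f ξ - c)) (Measure.pi fun _ : Fin n => P) :=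
  (integrable_const (Real.exp (|f (fun _ => 0)| + ∑ j, M j + |c|))).mono'
    (Real.continuous_exp.comp ((sepLip_continuous hf hM).sub continuous_const)).aestronglyMeasurable
    ((pi_ae_unit P hP n).mono fun ξ h => by
      simp only [Function.comp, Real.norm_eq_abs, abs_of_pos (Real.exp_pos _)]
      apply Real.exp_le_exp.2
      have h1 := sepLip_abs_bound hf hM ξ h
      have h2 := le_abs_self (f ξ)
      have h3 := neg_abs_le c
      linarith)

lemma noise_mgf (P : Measure α) [IsProbabilityMeasure P] (hP : ∀ᵐ ξ ∂P, ‖ξ‖ ≤ 1) :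
    ∀ (n : ℕ) (f : (Fin n → α) → ℝ) (M : Fin n → ℝ), (∀ j, 0 ≤ M j) → SepLip f M →
    ∫ ξ, Real.exp (f ξ - ∫ η, f η ∂(Measure.pi fun _ : Fin n => P))
        ∂(Measure.pi fun _ : Fin n => P)
      ≤ Real.exp (4 * ∑ j, M j ^ 2) := by
  intro n
  induction n with
  | zero =>
    intro f M hM hf
    have hconst : ∀ ξ : Fin 0 → α, f ξ = f (fun i => i.elim0) :=
      fun ξ => congrArg f (funext fun i => i.elim0)
    have h1 : ∫ η, f η ∂(Measure.pi fun _ : Fin 0 => P) = f (fun i => i.elim0) := by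
      rw [show f = fun _ => f (fun i => i.elim0) from funext hconst]
      simp
    rw [h1]
    simp_rw [hconst]
    simp
  | succ n ih =>
    intro f M hM hf
    set m := ∫ η, f η ∂(Measure.pi fun _ : Fin (n+1) => P) with hmdef
    have hfc : Continuous f := sepLip_continuous hf hM
    have hlip0 : ∀ (b : Fin n → α) (a a' : α),
        |f (Fin.cons a b) - f (Fin.cons a' b)| ≤ M 0 * dist a a' := by
      intro b a a'
      have := hf (Fin.cons a b) 0 a'
      rwa [Fin.update_cons_zero, Fin.cons_zero] at this
    have hcons_cont : ∀ b : Fin n → α, Continuous fun a : α => (Fin.cons a b : Fin (n+1) → α) := by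
      intro b
      apply continuous_pi
      intro i
      refine Fin.cases ?_ ?_ i
      · simp only [Fin.cons_zero]; exact continuous_id
      · intro j; simp only [Fin.cons_succ]; exact continuous_const
    have hint_cons : ∀ b : Fin n → α, Integrable (fun a => f (Fin.cons a b)) P := by
      intro b
      apply (integrable_const (|f (Fin.cons 0 b)| + M 0)).mono'
        (hfc.comp (hcons_cont b)).aestronglyMeasurable
      filter_upwards [hP] with a ha
      simp only [Function.comp, Real.norm_eq_abs]
      have h1 := hlip0 b a 0
      rw [dist_zero_right] at h1
      have h2 := abs_sub_abs_le_abs_sub (f (Fin.cons a b)) (f (Fin.cons 0 b))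
      nlinarith [hM 0, norm_nonneg a]
    set h : (Fin n → α) → ℝ := fun b => ∫ a, f (Fin.cons a b) ∂P with hh
    have hsep : SepLip h (fun j => M j.succ) := by
      intro b j y
      have key : ∀ a : α, |f (Fin.cons a b) - f (Fin.cons a (Function.update b j y))|
          ≤ M j.succ * dist (b j) y := by
        intro a
        have := hf (Fin.cons a b) j.succ y
        rwa [← Fin.cons_update, Fin.cons_succ] at this
      show |(∫ a, f (Fin.cons a b) ∂P) - ∫ a, f (Fin.cons a (Function.update b j y)) ∂P|
        ≤ M j.succ * dist (b j) y
      rw [← integral_sub (hint_cons b) (hint_cons _)]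
      have := norm_integral_le_of_norm_le_const (μ := P)
        (C := M j.succ * dist (b j) y)
        (f := fun a => f (Fin.cons a b) - f (Fin.cons a (Function.update b j y)))
        (Filter.Eventually.of_forall fun a => by rw [Real.norm_eq_abs]; exact key a)
      simpa [measure_univ] using this
    have hMsucc : ∀ j : Fin n, 0 ≤ M j.succ := fun j => hM _
    have hfint : Integrable f (Measure.pi fun _ : Fin (n+1) => P) :=
      sepLip_integrable P hP hf hM
    have hm_eq : m = ∫ b, h b ∂(Measure.pi fun _ : Fin n => P) := by
      rw [hmdef]; exact fubini_cons P n f hfint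
    have hexp_int : Integrable (fun ξ => Real.exp (f ξ - m))
        (Measure.pi fun _ : Fin (n+1) => P) := sepLip_exp_integrable P hP hf hM m
    have step1 : ∫ ξ, Real.exp (f ξ - m) ∂(Measure.pi fun _ : Fin (n+1) => P)
        = ∫ b, ∫ a, Real.exp (f (Fin.cons a b) - m) ∂P ∂(Measure.pi fun _ : Fin n => P) :=
      fubini_cons P n _ hexp_int
    have inner_eq : ∀ b, ∫ a, Real.exp (f (Fin.cons a b) - m) ∂P
        = Real.exp (h b - m) * ∫ a, Real.exp (f (Fin.cons a b) - h b) ∂P := by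
      intro b
      rw [← integral_const_mul]
      congr 1
      funext a
      rw [← Real.exp_add]
      ring_nf
    have inner_le : ∀ b, ∫ a, Real.exp (f (Fin.cons a b) - h b) ∂P
        ≤ Real.exp (4 * M 0 ^ 2) := by
      intro b
      exact onevar_mgf P hP (fun a => f (Fin.cons a b)) (M 0) (hM 0) (fun a a' => hlip0 b a a')
    have hmaj_int : Integrable (fun b => Real.exp (h b - m) * Real.exp (4 * M 0 ^ 2))
        (Measure.pi fun _ : Fin n => P) :=
      (sepLip_exp_integrable P hP hsep hMsucc m).mul_const _
    calc ∫ ξ, Real.exp (f ξ - m) ∂(Measure.pi fun _ : Fin (n+1) => P)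
        = ∫ b, Real.exp (h b - m) * ∫ a, Real.exp (f (Fin.cons a b) - h b) ∂P
            ∂(Measure.pi fun _ : Fin n => P) := by
          rw [step1]; exact integral_congr_ae (.of_forall inner_eq)
      _ ≤ ∫ b, Real.exp (h b - m) * Real.exp (4 * M 0 ^ 2)
            ∂(Measure.pi fun _ : Fin n => P) := by
          apply integral_mono_of_nonneg
          · exact .of_forall fun b =>
              mul_nonneg (Real.exp_pos _).le (integral_nonneg fun a => (Real.exp_pos _).le)
          · exact hmaj_int
          · exact .of_forall fun b => mul_le_mul_of_nonneg_left (inner_le b) (Real.exp_pos _).le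
      _ = Real.exp (4 * M 0 ^ 2) * ∫ b, Real.exp (h b - m) ∂(Measure.pi fun _ : Fin n => P) := by
          rw [← integral_const_mul]
          congr 1; funext b; ring
      _ ≤ Real.exp (4 * M 0 ^ 2) * Real.exp (4 * ∑ j : Fin n, M j.succ ^ 2) := by
          apply mul_le_mul_of_nonneg_left _ (Real.exp_pos _).le
          have := ih h (fun j => M j.succ) hMsucc hsep
          rwa [← hm_eq] at this
      _ = Real.exp (4 * ∑ j : Fin (n+1), M j ^ 2) := by
          rw [← Real.exp_add, Fin.sum_univ_succ]
          ring_nf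
end Noise


set_option maxHeartbeats 1600000

/-- If the dynamical system `(X,T,μ)` satisfies the exponential concentration
inequality, then the observed system satisfies a Gaussian deviation bound:
`μ_n ⊗ P^n(|K(y₀,…,y_{n-1}) - E[K]| ≥ t) ≤ 2 exp(-t²/(4D(1+ε²) ∑ Lip_j(K)²))`. -/
theorem observed_system_exponential_deviation {d : ℕ}
    (X : Set (EuclideanSpace ℝ (Fin d))) (hX : IsCompact X)
    (T : EuclideanSpace ℝ (Fin d) → EuclideanSpace ℝ (Fin d))
    (hT : Measurable T) (hTX : Set.MapsTo T X X)
    (μ : Measure (EuclideanSpace ℝ (Fin d))) [IsProbabilityMeasure μ]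
    (hμX : μ X = 1) (hinv : μ.map T = μ)
    (C : ℝ) (hC : 0 < C)
    (hconc : ∀ (n : ℕ), 1 ≤ n → ∀ (K : (Fin n → EuclideanSpace ℝ (Fin d)) → ℝ)
      (L : Fin n → ℝ), SepLip K L →
      ∫ x, Real.exp (K (fun i => T^[(i : ℕ)] x)
          - ∫ z, K (fun i => T^[(i : ℕ)] z) ∂μ) ∂μ
        ≤ Real.exp (C * ∑ j, L j ^ 2))
    (P : Measure (EuclideanSpace ℝ (Fin d))) [IsProbabilityMeasure P]
    (hP : ∀ᵐ ξ ∂P, ‖ξ‖ ≤ 1) :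
    ∃ D : ℝ, 0 < D ∧ ∀ ε : ℝ, 0 < ε → ∀ (n : ℕ), 1 ≤ n →
      ∀ (K : (Fin n → EuclideanSpace ℝ (Fin d)) → ℝ) (L : Fin n → ℝ), SepLip K L →
      ∀ t : ℝ, 0 < t →
      ((μ.prod (Measure.pi fun _ : Fin n => P))
          {p | t ≤ |K (fun i => T^[(i : ℕ)] p.1 + ε • p.2 i)
            - ∫ p', K (fun i => T^[(i : ℕ)] p'.1 + ε • p'.2 i)
                ∂(μ.prod (Measure.pi fun _ : Fin n => P))|}).toReal
        ≤ 2 * Real.exp (-t ^ 2 / (4 * D * (1 + ε ^ 2) * ∑ j, L j ^ 2)) := by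
  refine ⟨C + 4, by linarith, ?_⟩
  intro ε hε n hn K L hK t ht
  set ν := (Measure.pi fun _ : Fin n => P) with hν
  set L' : Fin n → ℝ := fun j => |L j| with hL'
  have hL'0 : ∀ j, 0 ≤ L' j := fun j => abs_nonneg _
  have hKL' : SepLip K L' := fun x j y =>
    (hK x j y).trans (mul_le_mul_of_nonneg_right (le_abs_self _) dist_nonneg)
  have hSeq : ∑ j, L' j ^ 2 = ∑ j, L j ^ 2 :=
    Finset.sum_congr rfl fun j _ => by rw [hL', sq_abs]
  have hS0 : 0 ≤ ∑ j, L j ^ 2 := Finset.sum_nonneg fun j _ => sq_nonneg _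
  rcases eq_or_lt_of_le hS0 with hSz | hSpos
  · -- degenerate case: all Lipschitz constants vanish
    rw [← hSz, mul_zero, div_zero, Real.exp_zero, mul_one]
    calc ((μ.prod ν) _).toReal ≤ ((μ.prod ν) Set.univ).toReal :=
          ENNReal.toReal_mono (measure_ne_top _ _) (measure_mono (Set.subset_univ _))
      _ = 1 := by simp
      _ ≤ 2 := by norm_num
  -- main case
  set S := ∑ j, L j ^ 2 with hS
  have hXmeas : MeasurableSet X := hX.isClosed.measurableSet
  have hmapiter : ∀ i : ℕ, μ.map (T^[i]) = μ := by
    intro i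
    induction i with
    | zero => simp
    | succ i ihm =>
      rw [Function.iterate_succ, ← Measure.map_map (hT.iterate i) hT, hinv, ihm]
  have horb : ∀ᵐ x ∂μ, ∀ i : Fin n, T^[(i : ℕ)] x ∈ X := by
    rw [ae_all_iff]
    intro i
    have h1 : μ (T^[(i : ℕ)] ⁻¹' X) = 1 := by
      calc μ (T^[(i : ℕ)] ⁻¹' X) = (μ.map (T^[(i : ℕ)])) X :=
            (Measure.map_apply (hT.iterate (i : ℕ)) hXmeas).symm
        _ = 1 := by rw [hmapiter]; exact hμX
    rw [ae_iff]
    exact (prob_compl_eq_zero_iff ((hT.iterate (i : ℕ)) hXmeas)).2 h1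
  obtain ⟨R, hRball⟩ := hX.isBounded.subset_closedBall (0 : EuclideanSpace ℝ (Fin d))
  set R' := max R 0 with hR'
  have hRX : ∀ z ∈ X, ‖z‖ ≤ R' := by
    intro z hz
    have := hRball hz
    rw [Metric.mem_closedBall, dist_zero_right] at this
    exact this.trans (le_max_left _ _)
  have hnoise : ∀ᵐ ξ ∂ν, ∀ i, ‖ξ i‖ ≤ 1 := pi_ae_unit P hP n
  have hprod : ∀ᵐ p ∂(μ.prod ν), (∀ i : Fin n, T^[(i : ℕ)] p.1 ∈ X) ∧ (∀ i, ‖p.2 i‖ ≤ 1) := by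
    rw [ae_iff]
    have hnull : (μ.prod ν) (({x | ¬ ∀ i : Fin n, T^[(i : ℕ)] x ∈ X}
          ×ˢ (Set.univ : Set (Fin n → EuclideanSpace ℝ (Fin d))))
      ∪ ((Set.univ : Set (EuclideanSpace ℝ (Fin d)))
          ×ˢ {ξ : Fin n → EuclideanSpace ℝ (Fin d) | ¬ ∀ i, ‖ξ i‖ ≤ 1})) = 0 := by
      apply measure_union_null
      · rw [Measure.prod_prod, ae_iff.1 horb, zero_mul]
      · rw [Measure.prod_prod, ae_iff.1 hnoise, mul_zero]
    refine measure_mono_null ?_ hnull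
    intro p hp
    simp only [Set.mem_setOf_eq, not_and_or] at hp
    rcases hp with h | h
    · exact Set.mem_union_left _ (Set.mk_mem_prod h (Set.mem_univ _))
    · exact Set.mem_union_right _ (Set.mk_mem_prod (Set.mem_univ _) h)
  have hYmeas : Measurable
      (fun p : (EuclideanSpace ℝ (Fin d)) × (Fin n → EuclideanSpace ℝ (Fin d)) =>
        fun i : Fin n => T^[(i : ℕ)] p.1 + ε • p.2 i) := by
    apply measurable_pi_lambda
    intro i
    exact ((hT.iterate (i : ℕ)).comp measurable_fst).add
      (((measurable_pi_apply i).comp measurable_snd).const_smul ε)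
  have horbmeas : Measurable
      (fun x : EuclideanSpace ℝ (Fin d) => fun i : Fin n => T^[(i : ℕ)] x) :=
    measurable_pi_lambda _ fun i => hT.iterate (i : ℕ)
  -- the one-sided deviation bound, for an arbitrary separately Lipschitz G
  have key : ∀ G : (Fin n → EuclideanSpace ℝ (Fin d)) → ℝ, SepLip G L' →
      ((μ.prod ν) {p | t ≤ G (fun i => T^[(i : ℕ)] p.1 + ε • p.2 i)
          - ∫ p', G (fun i => T^[(i : ℕ)] p'.1 + ε • p'.2 i) ∂(μ.prod ν)}).toReal
        ≤ Real.exp (-t ^ 2 / (4 * (C + 4) * (1 + ε ^ 2) * S)) := by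
    intro G hG
    have hCε : 0 < C + 4 * ε ^ 2 := by positivity
    set lam := t / (2 * S * (C + 4 * ε ^ 2)) with hlam
    have hlam0 : 0 < lam := div_pos ht (by positivity)
    have hGc : Continuous G := sepLip_continuous hG hL'0
    set Kp : (Fin n → EuclideanSpace ℝ (Fin d)) → ℝ :=
      fun z => ∫ ξ, G (fun i => z i + ε • ξ i) ∂ν with hKp
    have haddcont : ∀ z : Fin n → EuclideanSpace ℝ (Fin d),
        Continuous (fun ξ : Fin n → EuclideanSpace ℝ (Fin d) => fun i => z i + ε • ξ i) :=
      fun z => continuous_pi fun i => continuous_const.add ((continuous_apply i).const_smul ε)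
    have hGz_bound : ∀ z ξ : Fin n → EuclideanSpace ℝ (Fin d), (∀ i, ‖ξ i‖ ≤ 1) →
        |G (fun i => z i + ε • ξ i)| ≤ |G z| + ε * ∑ j, L' j := by
      intro z ξ hξ
      have h1 := sepLip_sum_bound hG (fun i => z i + ε • ξ i) z
      have h2 : ∑ j, L' j * dist (z j + ε • ξ j) (z j) ≤ ε * ∑ j, L' j := by
        rw [Finset.mul_sum]
        apply Finset.sum_le_sum
        intro j _
        have hd : dist (z j + ε • ξ j) (z j) = ε * ‖ξ j‖ := by
          rw [dist_eq_norm, add_sub_cancel_left, norm_smul, Real.norm_eq_abs, abs_of_pos hε]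
        rw [hd]
        calc L' j * (ε * ‖ξ j‖) ≤ L' j * (ε * 1) := by
              apply mul_le_mul_of_nonneg_left _ (hL'0 j)
              exact mul_le_mul_of_nonneg_left (hξ j) hε.le
          _ = ε * L' j := by ring
      have h3 := abs_sub_abs_le_abs_sub (G (fun i => z i + ε • ξ i)) (G z)
      linarith
    have hint_z : ∀ z : Fin n → EuclideanSpace ℝ (Fin d),
        Integrable (fun ξ => G (fun i => z i + ε • ξ i)) ν := by
      intro z
      apply (integrable_const (|G z| + ε * ∑ j, L' j)).mono'
        (hGc.comp (haddcont z)).aestronglyMeasurable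
      filter_upwards [hnoise] with ξ hξ
      simp only [Function.comp, Real.norm_eq_abs]
      exact hGz_bound z ξ hξ
    have hsepKp : SepLip Kp L' := by
      intro z j y
      have key2 : ∀ ξ : Fin n → EuclideanSpace ℝ (Fin d),
          |G (fun i => z i + ε • ξ i) - G (fun i => (Function.update z j y) i + ε • ξ i)|
            ≤ L' j * dist (z j) y := by
        intro ξ
        have h2 : (fun i => (Function.update z j y) i + ε • ξ i)
            = Function.update (fun i => z i + ε • ξ i) j (y + ε • ξ j) := by
          funext i
          by_cases hij : i = j
          · subst hij; simp
          · simp [Function.update_of_ne hij]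
        rw [h2]
        have h1 := hG (fun i => z i + ε • ξ i) j (y + ε • ξ j)
        have h3 : dist ((fun i => z i + ε • ξ i) j) (y + ε • ξ j) = dist (z j) y := by
          show dist (z j + ε • ξ j) (y + ε • ξ j) = _
          rw [dist_add_right]
        rwa [h3] at h1
      show |(∫ ξ, G (fun i => z i + ε • ξ i) ∂ν)
          - ∫ ξ, G (fun i => (Function.update z j y) i + ε • ξ i) ∂ν| ≤ L' j * dist (z j) y
      rw [← integral_sub (hint_z z) (hint_z _)]
      have := norm_integral_le_of_norm_le_const (μ := ν)
        (C := L' j * dist (z j) y)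
        (f := fun ξ => G (fun i => z i + ε • ξ i)
          - G (fun i => (Function.update z j y) i + ε • ξ i))
        (Filter.Eventually.of_forall fun ξ => by rw [Real.norm_eq_abs]; exact key2 ξ)
      simpa [measure_univ] using this
    have hKpc : Continuous Kp := sepLip_continuous hsepKp hL'0
    set BG := |G (fun _ => 0)| + (∑ j, L' j) * (R' + ε) with hBG
    have hGbound : ∀ w : Fin n → EuclideanSpace ℝ (Fin d),
        (∀ i, ‖w i‖ ≤ R' + ε) → |G w| ≤ BG := by
      intro w hw
      have h1 := sepLip_sum_bound hG w (fun _ => 0)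
      have h2 : ∑ j, L' j * dist (w j) 0 ≤ ∑ j, L' j * (R' + ε) := by
        apply Finset.sum_le_sum
        intro j _
        apply mul_le_mul_of_nonneg_left _ (hL'0 j)
        rw [dist_zero_right]; exact hw j
      have h3 : ∑ j, L' j * (R' + ε) = (∑ j, L' j) * (R' + ε) := by rw [Finset.sum_mul]
      have h4 := abs_sub_abs_le_abs_sub (G w) (G (fun _ => 0))
      rw [hBG]; linarith
    have hYbound : ∀ᵐ p ∂(μ.prod ν), ∀ i : Fin n, ‖T^[(i : ℕ)] p.1 + ε • p.2 i‖ ≤ R' + ε := by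
      filter_upwards [hprod] with p hp
      intro i
      calc ‖T^[(i : ℕ)] p.1 + ε • p.2 i‖ ≤ ‖T^[(i : ℕ)] p.1‖ + ‖ε • p.2 i‖ := norm_add_le _ _
        _ ≤ R' + ε := by
            apply add_le_add (hRX _ (hp.1 i))
            rw [norm_smul, Real.norm_eq_abs, abs_of_pos hε]
            calc ε * ‖p.2 i‖ ≤ ε * 1 := mul_le_mul_of_nonneg_left (hp.2 i) hε.le
              _ = ε := mul_one ε
    have hFint : Integrable (fun p => G (fun i => T^[(i : ℕ)] p.1 + ε • p.2 i)) (μ.prod ν) := by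
      apply (integrable_const BG).mono' (hGc.measurable.comp hYmeas).aestronglyMeasurable
      filter_upwards [hYbound] with p hp
      rw [Real.norm_eq_abs]
      exact hGbound _ hp
    set m := ∫ p', G (fun i => T^[(i : ℕ)] p'.1 + ε • p'.2 i) ∂(μ.prod ν) with hm
    have hm_fact : m = ∫ x, Kp (fun i => T^[(i : ℕ)] x) ∂μ := by
      rw [hm, integral_prod _ hFint]
    have hKporb_bound : ∀ᵐ x ∂μ, |Kp (fun i => T^[(i : ℕ)] x)| ≤ BG := by
      filter_upwards [horb] with x hx
      have := norm_integral_le_of_norm_le_const (μ := ν) (C := BG)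
        (f := fun ξ => G (fun i => T^[(i : ℕ)] x + ε • ξ i)) ?_
      · simpa [measure_univ, Real.norm_eq_abs] using this
      · filter_upwards [hnoise] with ξ hξ
        rw [Real.norm_eq_abs]
        apply hGbound
        intro i
        calc ‖T^[(i : ℕ)] x + ε • ξ i‖ ≤ ‖T^[(i : ℕ)] x‖ + ‖ε • ξ i‖ := norm_add_le _ _
          _ ≤ R' + ε := by
              apply add_le_add (hRX _ (hx i))
              rw [norm_smul, Real.norm_eq_abs, abs_of_pos hε]
              calc ε * ‖ξ i‖ ≤ ε * 1 := mul_le_mul_of_nonneg_left (hξ i) hε.le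
                _ = ε := mul_one ε
    have hexpF_int : Integrable
        (fun p => Real.exp (lam * (G (fun i => T^[(i : ℕ)] p.1 + ε • p.2 i) - m)))
        (μ.prod ν) := by
      apply (integrable_const (Real.exp (lam * (BG + |m|)))).mono'
      · exact (Real.measurable_exp.comp
          (((hGc.measurable.comp hYmeas).sub measurable_const).const_mul lam)).aestronglyMeasurable
      · filter_upwards [hYbound] with p hp
        rw [Real.norm_eq_abs, abs_of_pos (Real.exp_pos _)]
        apply Real.exp_le_exp.2
        apply mul_le_mul_of_nonneg_left _ hlam0.le
        have h1 := hGbound _ hp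
        have h2 := le_abs_self (G (fun i => T^[(i : ℕ)] p.1 + ε • p.2 i))
        have h3 := neg_abs_le m
        linarith
    have step1 : ∫ p, Real.exp (lam * (G (fun i => T^[(i : ℕ)] p.1 + ε • p.2 i) - m)) ∂(μ.prod ν)
        = ∫ x, ∫ ξ, Real.exp (lam * (G (fun i => T^[(i : ℕ)] x + ε • ξ i) - m)) ∂ν ∂μ :=
      integral_prod _ hexpF_int
    have inner_bound : ∀ z : Fin n → EuclideanSpace ℝ (Fin d),
        ∫ ξ, Real.exp (lam * (G (fun i => z i + ε • ξ i) - m)) ∂ν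
          ≤ Real.exp (lam * (Kp z - m)) * Real.exp (4 * lam ^ 2 * ε ^ 2 * S) := by
      intro z
      have hsepfz : SepLip (fun ξ : Fin n → EuclideanSpace ℝ (Fin d) =>
          lam * G (fun i => z i + ε • ξ i)) (fun j => lam * ε * L' j) := by
        intro ξ j y
        have h2 : (fun i => z i + ε • (Function.update ξ j y) i)
            = Function.update (fun i => z i + ε • ξ i) j (z j + ε • y) := by
          funext i
          by_cases hij : i = j
          · subst hij; simp
          · simp [Function.update_of_ne hij]
        show |lam * G (fun i => z i + ε • ξ i)
            - lam * G (fun i => z i + ε • (Function.update ξ j y) i)|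
          ≤ lam * ε * L' j * dist (ξ j) y
        rw [h2]
        have h1 := hG (fun i => z i + ε • ξ i) j (z j + ε • y)
        have h3 : dist ((fun i => z i + ε • ξ i) j) (z j + ε • y) = ε * dist (ξ j) y := by
          show dist (z j + ε • ξ j) (z j + ε • y) = _
          rw [dist_add_left, dist_smul₀, Real.norm_eq_abs, abs_of_pos hε]
        rw [h3] at h1
        calc |lam * G (fun i => z i + ε • ξ i)
              - lam * G (Function.update (fun i => z i + ε • ξ i) j (z j + ε • y))|
            = lam * |G (fun i => z i + ε • ξ i)
              - G (Function.update (fun i => z i + ε • ξ i) j (z j + ε • y))| := by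
              rw [← mul_sub, abs_mul, abs_of_pos hlam0]
          _ ≤ lam * (L' j * (ε * dist (ξ j) y)) := mul_le_mul_of_nonneg_left h1 hlam0.le
          _ = lam * ε * L' j * dist (ξ j) y := by ring
      have hns := noise_mgf P hP n _ _
        (fun j => mul_nonneg (mul_nonneg hlam0.le hε.le) (hL'0 j)) hsepfz
      rw [← hν] at hns
      have hmean : (∫ η, lam * G (fun i => z i + ε • η i) ∂ν) = lam * Kp z := by
        rw [integral_const_mul]
      rw [hmean] at hns
      have hsum : (4 : ℝ) * ∑ j, (lam * ε * L' j) ^ 2 = 4 * lam ^ 2 * ε ^ 2 * S := by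
        calc (4 : ℝ) * ∑ j, (lam * ε * L' j) ^ 2
            = 4 * ∑ j, (lam ^ 2 * ε ^ 2) * L' j ^ 2 := by
              congr 1
              apply Finset.sum_congr rfl
              intro j _
              ring
          _ = 4 * ((lam ^ 2 * ε ^ 2) * ∑ j, L' j ^ 2) := by rw [← Finset.mul_sum]
          _ = 4 * lam ^ 2 * ε ^ 2 * S := by rw [hSeq]; ring
      rw [hsum] at hns
      have hfac : ∫ ξ, Real.exp (lam * (G (fun i => z i + ε • ξ i) - m)) ∂ν
          = Real.exp (lam * (Kp z - m))
            * ∫ ξ, Real.exp (lam * G (fun i => z i + ε • ξ i) - lam * Kp z) ∂ν := by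
        rw [← integral_const_mul]
        congr 1
        funext ξ
        rw [← Real.exp_add]
        ring_nf
      rw [hfac]
      exact mul_le_mul_of_nonneg_left hns (Real.exp_pos _).le
    have hmaj_int : Integrable (fun x => Real.exp (lam * (Kp (fun i => T^[(i : ℕ)] x) - m))
        * Real.exp (4 * lam ^ 2 * ε ^ 2 * S)) μ := by
      apply Integrable.mul_const
      apply (integrable_const (Real.exp (lam * (BG + |m|)))).mono'
      · exact (Real.measurable_exp.comp
          (((hKpc.measurable.comp horbmeas).sub measurable_const).const_mul lam)).aestronglyMeasurable
      · filter_upwards [hKporb_bound] with x hx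
        rw [Real.norm_eq_abs, abs_of_pos (Real.exp_pos _)]
        apply Real.exp_le_exp.2
        apply mul_le_mul_of_nonneg_left _ hlam0.le
        have h2 := le_abs_self (Kp (fun i => T^[(i : ℕ)] x))
        have h3 := neg_abs_le m
        linarith
    have step2 : ∫ p, Real.exp (lam * (G (fun i => T^[(i : ℕ)] p.1 + ε • p.2 i) - m)) ∂(μ.prod ν)
        ≤ Real.exp (4 * lam ^ 2 * ε ^ 2 * S)
          * ∫ x, Real.exp (lam * (Kp (fun i => T^[(i : ℕ)] x) - m)) ∂μ := by
      rw [step1]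
      calc ∫ x, ∫ ξ, Real.exp (lam * (G (fun i => T^[(i : ℕ)] x + ε • ξ i) - m)) ∂ν ∂μ
          ≤ ∫ x, Real.exp (lam * (Kp (fun i => T^[(i : ℕ)] x) - m))
              * Real.exp (4 * lam ^ 2 * ε ^ 2 * S) ∂μ := by
            apply integral_mono_of_nonneg
            · exact Filter.Eventually.of_forall fun x =>
                integral_nonneg fun ξ => (Real.exp_pos _).le
            · exact hmaj_int
            · exact Filter.Eventually.of_forall fun x => inner_bound _
        _ = Real.exp (4 * lam ^ 2 * ε ^ 2 * S)
            * ∫ x, Real.exp (lam * (Kp (fun i => T^[(i : ℕ)] x) - m)) ∂μ := by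
            rw [← integral_const_mul]
            congr 1
            funext x
            ring
    have hsepKl : SepLip (fun z => lam * Kp z) (fun j => lam * L' j) := by
      intro z j y
      have h1 := hsepKp z j y
      show |lam * Kp z - lam * Kp (Function.update z j y)| ≤ lam * L' j * dist (z j) y
      calc |lam * Kp z - lam * Kp (Function.update z j y)|
          = lam * |Kp z - Kp (Function.update z j y)| := by
            rw [← mul_sub, abs_mul, abs_of_pos hlam0]
        _ ≤ lam * (L' j * dist (z j) y) := mul_le_mul_of_nonneg_left h1 hlam0.le
        _ = lam * L' j * dist (z j) y := by ring
    have hconc' := hconc n hn (fun z => lam * Kp z) (fun j => lam * L' j) hsepKl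
    have e1 : ∫ z, lam * Kp (fun i => T^[(i : ℕ)] z) ∂μ = lam * m := by
      rw [integral_const_mul, ← hm_fact]
    have e2 : C * ∑ j, (lam * L' j) ^ 2 = C * lam ^ 2 * S := by
      calc C * ∑ j, (lam * L' j) ^ 2 = C * ∑ j, lam ^ 2 * L' j ^ 2 := by
            congr 1
            apply Finset.sum_congr rfl
            intro j _
            ring
        _ = C * (lam ^ 2 * ∑ j, L' j ^ 2) := by rw [← Finset.mul_sum]
        _ = C * lam ^ 2 * S := by rw [hSeq]; ring
    rw [e1, e2] at hconc'
    simp_rw [← mul_sub] at hconc'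
    have hMGF : ∫ p, Real.exp (lam * (G (fun i => T^[(i : ℕ)] p.1 + ε • p.2 i) - m)) ∂(μ.prod ν)
        ≤ Real.exp (lam ^ 2 * S * (C + 4 * ε ^ 2)) := by
      calc ∫ p, Real.exp (lam * (G (fun i => T^[(i : ℕ)] p.1 + ε • p.2 i) - m)) ∂(μ.prod ν)
          ≤ Real.exp (4 * lam ^ 2 * ε ^ 2 * S)
            * ∫ x, Real.exp (lam * (Kp (fun i => T^[(i : ℕ)] x) - m)) ∂μ := step2
        _ ≤ Real.exp (4 * lam ^ 2 * ε ^ 2 * S) * Real.exp (C * lam ^ 2 * S) :=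
            mul_le_mul_of_nonneg_left hconc' (Real.exp_pos _).le
        _ = Real.exp (lam ^ 2 * S * (C + 4 * ε ^ 2)) := by
            rw [← Real.exp_add]
            ring_nf
    have hcheb := mul_meas_ge_le_integral_of_nonneg (μ := μ.prod ν)
      (f := fun p => Real.exp (lam * (G (fun i => T^[(i : ℕ)] p.1 + ε • p.2 i) - m)))
      (Filter.Eventually.of_forall fun p => (Real.exp_pos _).le) hexpF_int (Real.exp (lam * t))
    have hsubset : {p : (EuclideanSpace ℝ (Fin d)) × (Fin n → EuclideanSpace ℝ (Fin d)) |
        t ≤ G (fun i => T^[(i : ℕ)] p.1 + ε • p.2 i) - m}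
        ⊆ {p | Real.exp (lam * t)
            ≤ Real.exp (lam * (G (fun i => T^[(i : ℕ)] p.1 + ε • p.2 i) - m))} :=
      fun p hp => Real.exp_le_exp.2 (mul_le_mul_of_nonneg_left hp hlam0.le)
    have hfinal : ((μ.prod ν) {p | t ≤ G (fun i => T^[(i : ℕ)] p.1 + ε • p.2 i) - m}).toReal
        ≤ Real.exp (lam ^ 2 * S * (C + 4 * ε ^ 2) - lam * t) := by
      have h5 : Real.exp (lam * t)
          * ((μ.prod ν) {p | t ≤ G (fun i => T^[(i : ℕ)] p.1 + ε • p.2 i) - m}).toReal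
          ≤ Real.exp (lam ^ 2 * S * (C + 4 * ε ^ 2)) := by
        calc Real.exp (lam * t)
            * ((μ.prod ν) {p | t ≤ G (fun i => T^[(i : ℕ)] p.1 + ε • p.2 i) - m}).toReal
            ≤ Real.exp (lam * t) * ((μ.prod ν) {p | Real.exp (lam * t)
              ≤ Real.exp (lam * (G (fun i => T^[(i : ℕ)] p.1 + ε • p.2 i) - m))}).toReal := by
              apply mul_le_mul_of_nonneg_left _ (Real.exp_pos _).le
              exact ENNReal.toReal_mono (measure_ne_top _ _) (measure_mono hsubset)
          _ ≤ ∫ p, Real.exp (lam * (G (fun i => T^[(i : ℕ)] p.1 + ε • p.2 i) - m)) ∂(μ.prod ν) :=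
              hcheb
          _ ≤ Real.exp (lam ^ 2 * S * (C + 4 * ε ^ 2)) := hMGF
      rw [Real.exp_sub, le_div_iff₀ (Real.exp_pos _)]
      calc ((μ.prod ν) {p | t ≤ G (fun i => T^[(i : ℕ)] p.1 + ε • p.2 i) - m}).toReal
            * Real.exp (lam * t)
          = Real.exp (lam * t)
            * ((μ.prod ν) {p | t ≤ G (fun i => T^[(i : ℕ)] p.1 + ε • p.2 i) - m}).toReal :=
            mul_comm _ _
        _ ≤ Real.exp (lam ^ 2 * S * (C + 4 * ε ^ 2)) := h5
    have harith : lam ^ 2 * S * (C + 4 * ε ^ 2) - lam * t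
        = -t ^ 2 / (4 * S * (C + 4 * ε ^ 2)) := by
      rw [hlam]
      field_simp
      ring
    have hcompare : -t ^ 2 / (4 * S * (C + 4 * ε ^ 2))
        ≤ -t ^ 2 / (4 * (C + 4) * (1 + ε ^ 2) * S) := by
      rw [neg_div, neg_div, neg_le_neg_iff]
      apply div_le_div_of_nonneg_left (sq_nonneg t) (by positivity)
      nlinarith [mul_nonneg (mul_nonneg hC.le hSpos.le) (sq_nonneg ε), hSpos.le]
    calc ((μ.prod ν) {p | t ≤ G (fun i => T^[(i : ℕ)] p.1 + ε • p.2 i) - m}).toReal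
        ≤ Real.exp (lam ^ 2 * S * (C + 4 * ε ^ 2) - lam * t) := hfinal
      _ = Real.exp (-t ^ 2 / (4 * S * (C + 4 * ε ^ 2))) := by rw [harith]
      _ ≤ Real.exp (-t ^ 2 / (4 * (C + 4) * (1 + ε ^ 2) * S)) := Real.exp_le_exp.2 hcompare
  -- two-sided bound
  have hKneg : SepLip (fun z => -K z) L' := by
    intro x j y
    have h := hKL' x j y
    show |(-K x) - (-K (Function.update x j y))| ≤ L' j * dist (x j) y
    rw [show (-K x) - (-K (Function.update x j y))
      = -(K x - K (Function.update x j y)) by ring, abs_neg]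
    exact h
  have h1 := key K hKL'
  have h2 := key (fun z => -K z) hKneg
  have hnegint : (∫ p', -K (fun i => T^[(i : ℕ)] p'.1 + ε • p'.2 i) ∂(μ.prod ν))
      = -(∫ p', K (fun i => T^[(i : ℕ)] p'.1 + ε • p'.2 i) ∂(μ.prod ν)) := integral_neg _
  set m0 := ∫ p', K (fun i => T^[(i : ℕ)] p'.1 + ε • p'.2 i) ∂(μ.prod ν) with hm0
  have hsplit : {p : (EuclideanSpace ℝ (Fin d)) × (Fin n → EuclideanSpace ℝ (Fin d)) |
      t ≤ |K (fun i => T^[(i : ℕ)] p.1 + ε • p.2 i) - m0|}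
      ⊆ {p | t ≤ K (fun i => T^[(i : ℕ)] p.1 + ε • p.2 i) - m0}
        ∪ {p | t ≤ -K (fun i => T^[(i : ℕ)] p.1 + ε • p.2 i)
            - ∫ p', -K (fun i => T^[(i : ℕ)] p'.1 + ε • p'.2 i) ∂(μ.prod ν)} := by
    intro p hp
    simp only [Set.mem_setOf_eq] at hp
    simp only [Set.mem_union, Set.mem_setOf_eq]
    rw [hnegint]
    rcases le_abs.1 hp with h | h
    · left; exact h
    · right; linarith
  calc ((μ.prod ν) {p | t ≤ |K (fun i => T^[(i : ℕ)] p.1 + ε • p.2 i) - m0|}).toReal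
      ≤ ((μ.prod ν) ({p | t ≤ K (fun i => T^[(i : ℕ)] p.1 + ε • p.2 i) - m0}
        ∪ {p | t ≤ -K (fun i => T^[(i : ℕ)] p.1 + ε • p.2 i)
            - ∫ p', -K (fun i => T^[(i : ℕ)] p'.1 + ε • p'.2 i) ∂(μ.prod ν)})).toReal :=
        ENNReal.toReal_mono (measure_ne_top _ _) (measure_mono hsplit)
    _ ≤ (((μ.prod ν) {p | t ≤ K (fun i => T^[(i : ℕ)] p.1 + ε • p.2 i) - m0})
        + ((μ.prod ν) {p | t ≤ -K (fun i => T^[(i : ℕ)] p.1 + ε • p.2 i)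
            - ∫ p', -K (fun i => T^[(i : ℕ)] p'.1 + ε • p'.2 i) ∂(μ.prod ν)})).toReal :=
        ENNReal.toReal_mono (ENNReal.add_ne_top.2 ⟨measure_ne_top _ _, measure_ne_top _ _⟩)
          (measure_union_le _ _)
    _ = ((μ.prod ν) {p | t ≤ K (fun i => T^[(i : ℕ)] p.1 + ε • p.2 i) - m0}).toReal
        + ((μ.prod ν) {p | t ≤ -K (fun i => T^[(i : ℕ)] p.1 + ε • p.2 i)
            - ∫ p', -K (fun i => T^[(i : ℕ)] p'.1 + ε • p'.2 i) ∂(μ.prod ν)}).toReal :=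
        ENNReal.toReal_add (measure_ne_top _ _) (measure_ne_top _ _)
    _ ≤ Real.exp (-t ^ 2 / (4 * (C + 4) * (1 + ε ^ 2) * S))
        + Real.exp (-t ^ 2 / (4 * (C + 4) * (1 + ε ^ 2) * S)) := add_le_add h1 h2
    _ = 2 * Real.exp (-t ^ 2 / (4 * (C + 4) * (1 + ε ^ 2) * S)) := by ring
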